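/- Let T ≥ 1 and define G_T : ℝ^T → ℝ by G_T(x) = Ψ(1)Λ(x₁) + Σ_{i=2}^T [Ψ(−x_{i−1})Λ(−x_i) + Ψ(x_{i−1})Λ(x_i)], where Ψ(x) = exp(1 − 1/(2x − 1)²) for x > 1/2 and Ψ(x) = 0 for x ≤ 1/2, and Λ(x) = 8(e^{−x²/2} − 1). Then G_T(0) = 0 and G_T(x) ≥ −40·T for all x ∈ ℝ^T; in particular G_T(0) − inf_{x∈ℝ^T} G_T(x) ≤ 40·T. -/
import Mathlib


/-- The bump-like component function `Ψ` of the hard-instance construction. -/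
noncomputable def Psi (x : ℝ) : ℝ :=
  if 1 / 2 < x then Real.exp (1 - 1 / (2 * x - 1) ^ 2) else 0

/-- The component function `Λ` of the hard-instance construction. -/
noncomputable def Lam (x : ℝ) : ℝ := 8 * (Real.exp (-x ^ 2 / 2) - 1)

/-- The hard instance `G_T(x) = Ψ(1)Λ(x₁) + ∑_{i=2}^T [Ψ(-x_{i-1})Λ(-x_i) + Ψ(x_{i-1})Λ(x_i)]`
(coordinates are `0`-indexed in Lean: mathematical `x_i` is Lean's `x ⟨i-1, _⟩`). -/
noncomputable def G (T : ℕ) (x : EuclideanSpace ℝ (Fin T)) : ℝ :=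
  ∑ i : Fin T,
    if (i : ℕ) = 0 then Psi 1 * Lam (x i)
    else
      Psi (-(x ⟨(i : ℕ) - 1, Nat.lt_of_le_of_lt (Nat.sub_le _ _) i.isLt⟩)) * Lam (-(x i)) +
        Psi (x ⟨(i : ℕ) - 1, Nat.lt_of_le_of_lt (Nat.sub_le _ _) i.isLt⟩) * Lam (x i)

lemma Psi_nonneg (x : ℝ) : 0 ≤ Psi x := by
  unfold Psi; split <;> [exact (Real.exp_pos _).le; rfl]

lemma Psi_le (x : ℝ) : Psi x ≤ Real.exp 1 := by
  unfold Psi; split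
  · exact Real.exp_le_exp.mpr (by nlinarith [sq_nonneg (2 * x - 1), div_nonneg (zero_le_one (α := ℝ)) (sq_nonneg (2 * x - 1))])
  · exact (Real.exp_pos _).le

lemma Lam_nonpos (x : ℝ) : Lam x ≤ 0 := by
  unfold Lam
  have : Real.exp (-x ^ 2 / 2) ≤ 1 := Real.exp_le_one_iff.mpr (by nlinarith [sq_nonneg x])
  nlinarith

lemma Lam_ge (x : ℝ) : -8 ≤ Lam x := by
  unfold Lam
  have := Real.exp_pos (-x ^ 2 / 2)
  nlinarith

lemma Lam_zero : Lam 0 = 0 := by simp [Lam]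

lemma pair_sum_le (a : ℝ) : Psi (-a) + Psi a ≤ Real.exp 1 := by
  rcases le_or_gt a (1/2) with h | h
  · rcases le_or_gt (-a) (1/2) with h' | h'
    · have ha : Psi a = 0 := by unfold Psi; rw [if_neg (not_lt.mpr h)]
      have ha' : Psi (-a) = 0 := by unfold Psi; rw [if_neg (not_lt.mpr h')]
      rw [ha, ha', add_zero]
      exact (Real.exp_pos 1).le
    · have : Psi a = 0 := by unfold Psi; rw [if_neg (not_lt.mpr h)]
      rw [this, add_zero]; exact Psi_le _
  · have : Psi (-a) = 0 := by unfold Psi; rw [if_neg (by push_neg; linarith)]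
    rw [this, zero_add]; exact Psi_le _

lemma pair_bound (a b : ℝ) : -40 ≤ Psi (-a) * Lam (-b) + Psi a * Lam b := by
  have h1 : Psi (-a) * Lam (-b) ≥ Psi (-a) * (-8) :=
    mul_le_mul_of_nonneg_left (Lam_ge _) (Psi_nonneg _)
  have h2 : Psi a * Lam b ≥ Psi a * (-8) :=
    mul_le_mul_of_nonneg_left (Lam_ge _) (Psi_nonneg _)
  have h3 := pair_sum_le a
  have he : Real.exp 1 ≤ 3 := by
    have := Real.exp_one_lt_d9; linarith
  nlinarith

/-- `G_T(0) = 0`, `G_T(x) ≥ -40T` for all `x`, and consequently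
`G_T(0) - inf_x G_T(x) ≤ 40T`. -/
theorem stmt_12 (T : ℕ) (hT : 1 ≤ T) :
    G T 0 = 0 ∧
    (∀ x : EuclideanSpace ℝ (Fin T), G T x ≥ -40 * T) ∧
    G T 0 - ⨅ x : EuclideanSpace ℝ (Fin T), G T x ≤ 40 * T := by
  have hzero : G T 0 = 0 := by
    unfold G
    apply Finset.sum_eq_zero
    intro i _
    have h0 : (0 : EuclideanSpace ℝ (Fin T)) i = 0 := rfl
    split <;> simp [h0, Lam_zero, show ∀ j, (0 : EuclideanSpace ℝ (Fin T)) j = 0 from fun _ => rfl]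
  have hlb : ∀ x : EuclideanSpace ℝ (Fin T), G T x ≥ -40 * T := by
    intro x
    unfold G
    have : ∀ i ∈ Finset.univ (α := Fin T), (-40 : ℝ) ≤
        (if (i : ℕ) = 0 then Psi 1 * Lam (x i)
        else
          Psi (-(x ⟨(i : ℕ) - 1, Nat.lt_of_le_of_lt (Nat.sub_le _ _) i.isLt⟩)) * Lam (-(x i)) +
            Psi (x ⟨(i : ℕ) - 1, Nat.lt_of_le_of_lt (Nat.sub_le _ _) i.isLt⟩) * Lam (x i)) := by
      intro i _
      split
      · have h1 : Psi 1 * Lam (x i) ≥ Psi 1 * (-8) :=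
          mul_le_mul_of_nonneg_left (Lam_ge _) (Psi_nonneg _)
        have h2 := Psi_le 1
        have he : Real.exp 1 ≤ 3 := by have := Real.exp_one_lt_d9; linarith
        have h3 := Psi_nonneg 1
        nlinarith
      · exact pair_bound _ _
    calc (-40 : ℝ) * T = ∑ _i : Fin T, (-40 : ℝ) := by
          simp [Finset.sum_const, mul_comm]
      _ ≤ _ := Finset.sum_le_sum this
  refine ⟨hzero, hlb, ?_⟩
  have hinf : (-40 : ℝ) * T ≤ ⨅ x : EuclideanSpace ℝ (Fin T), G T x :=
    le_ciInf fun x => hlb x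
  rw [hzero]
  linarith
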